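/- In K(x,y): (i) if f is a K-linear combination of the monomials (x·y)·y, x·y², y² and ∂_x(f) = ∂_y(f) = 0, then f = 0 (there is no train Peirce-evanescent identity of degree (1,2)); (ii) for every n ≥ 2 and every commutative nonassociative monomial w of bidegree (n,2) in (x,y) with w ≠ (x^{{n}}y)·y and w ≠ x^{{n}}y², there exists a unique element P_w of the K-linear span of {(x^{{r}}y)·y : 1 ≤ r ≤ n} ∪ {x^{{s}}y² : 0 ≤ s ≤ n} such that ε(P_w) = 1 and ∂_x(w − P_w) = ∂_y(w − P_w) = 0; consequently w − P_w is a Peirce-evanescent identity. -/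

import Mathlib

namespace Evanescent

universe u v

variable {T : Type u}

/-- The commutativity relation on the free magma on `T`. -/
inductive CommRel (T : Type u) : FreeMagma T → FreeMagma T → Prop
  | comm (a b : FreeMagma T) : CommRel T (a * b) (b * a)
  | mul_left {a b : FreeMagma T} (c : FreeMagma T) :
      CommRel T a b → CommRel T (a * c) (b * c)
  | mul_right (c : FreeMagma T) {a b : FreeMagma T} :
      CommRel T a b → CommRel T (c * a) (c * b)

/-- The free commutative magma on `T`: the set of commutative nonassociative
monomials (words) in the variables `T`. -/
def FreeCommMagma (T : Type u) : Type u := Quot (CommRel T)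

namespace FreeCommMagma

instance : Mul (FreeCommMagma T) :=
  ⟨Quot.map₂ (· * ·) (fun a _ _ h => CommRel.mul_right a h)
    (fun _ _ b h => CommRel.mul_left b h)⟩

/-- The class of a nonassociative word in the free commutative magma. -/
def mk (w : FreeMagma T) : FreeCommMagma T := Quot.mk (CommRel T) w

/-- The generator of the free commutative magma corresponding to a variable. -/
def of (t : T) : FreeCommMagma T := mk (FreeMagma.of t)

@[simp] lemma mk_mul (a b : FreeMagma T) : mk a * mk b = mk (a * b) := rfl

protected lemma mul_comm (a b : FreeCommMagma T) : a * b = b * a := by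
  induction a using Quot.ind
  induction b using Quot.ind
  exact Quot.sound (CommRel.comm _ _)

instance : CommMagma (FreeCommMagma T) := ⟨FreeCommMagma.mul_comm⟩

end FreeCommMagma

section Peirce

variable (R : Type v) [Semiring R] [DecidableEq T]

/-- The Peirce polynomial of a (noncommutative) nonassociative word, with
coefficients in `R`. -/
noncomputable def peirceAux (i : T) : FreeMagma T → Polynomial R
  | .of j => if j = i then 1 else 0
  | .mul u v => Polynomial.X * (peirceAux i u + peirceAux i v)

@[simp] lemma peirceAux_mul (i : T) (u v : FreeMagma T) :
    peirceAux R i (u * v) = Polynomial.X * (peirceAux R i u + peirceAux R i v) := rfl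

@[simp] lemma peirceAux_of (i j : T) :
    peirceAux R i (FreeMagma.of j) = if j = i then 1 else 0 := rfl

/-- The number of occurrences of the variable `i` in a nonassociative word. -/
def countAux (i : T) : FreeMagma T → ℕ
  | .of j => if j = i then 1 else 0
  | .mul u v => countAux i u + countAux i v

@[simp] lemma countAux_mul (i : T) (u v : FreeMagma T) :
    countAux i (u * v) = countAux i u + countAux i v := rfl

lemma peirceAux_respects (i : T) {a b : FreeMagma T} (h : CommRel T a b) :
    peirceAux R i a = peirceAux R i b := by
  induction h with
  | comm a b => simp [add_comm]
  | mul_left c h ih => simp [ih]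
  | mul_right c h ih => simp [ih]

lemma countAux_respects (i : T) {a b : FreeMagma T} (h : CommRel T a b) :
    countAux i a = countAux i b := by
  induction h with
  | comm a b => simp [Nat.add_comm]
  | mul_left c h ih => simp [ih]
  | mul_right c h ih => simp [ih]

/-- The Peirce polynomial `∂ᵢ(w)` of a commutative nonassociative monomial `w`,
determined by `∂ᵢ(tᵢ) = 1`, `∂ᵢ(tⱼ) = 0` for `j ≠ i`, and
`∂ᵢ(u·v) = X·(∂ᵢ(u) + ∂ᵢ(v))`. -/
noncomputable def FreeCommMagma.peirce (i : T) : FreeCommMagma T → Polynomial R :=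
  Quot.lift (peirceAux R i) fun _ _ h => peirceAux_respects R i h

/-- The number of occurrences (degree) of the variable `i` in a commutative
nonassociative monomial. -/
def FreeCommMagma.count (i : T) : FreeCommMagma T → ℕ :=
  Quot.lift (countAux i) fun _ _ h => countAux_respects i h

end Peirce

/-- Principal powers of an element of a magma: `ppow a n = a^(n+1)`,
i.e. `ppow a 0 = a` and `ppow a (n+1) = a * (ppow a n)`. -/
def ppow {M : Type v} [Mul M] (a : M) : ℕ → M
  | 0 => a
  | n + 1 => a * ppow a n

/-- Iterated left multiplication: `lpow a r g = a^{{r}} g`, i.e. `lpow a 0 g = g` and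
`lpow a (r+1) g = a * (lpow a r g)`. -/
def lpow {M : Type v} [Mul M] (a : M) : ℕ → M → M
  | 0, g => g
  | r + 1, g => a * lpow a r g

section Algebra

variable (K : Type v) [Field K]

/-- A commutative nonassociative monomial, viewed as an element of the free
commutative nonassociative algebra `K(T)` (realized as the magma algebra of the
free commutative magma). -/
noncomputable def mono (w : FreeCommMagma T) : MonoidAlgebra K (FreeCommMagma T) :=
  MonoidAlgebra.single w 1

/-- The augmentation (sum of the coefficients) of an element of the free
commutative nonassociative algebra. -/
noncomputable def aug : MonoidAlgebra K (FreeCommMagma T) →ₗ[K] K :=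
  (Finsupp.lsum K fun _ => LinearMap.id) ∘ₗ
    (MonoidAlgebra.coeffLinearEquiv K).toLinearMap

/-- The Peirce polynomial `∂ᵢ : K(T) → K[X]`, the `K`-linear map determined on
monomials by `∂ᵢ(tᵢ) = 1`, `∂ᵢ(tⱼ) = 0` for `j ≠ i`, and `∂ᵢ(u·v) = X·(∂ᵢ(u) + ∂ᵢ(v))`. -/
noncomputable def Dp [DecidableEq T] (i : T) :
    MonoidAlgebra K (FreeCommMagma T) →ₗ[K] Polynomial K :=
  (Finsupp.lsum K fun w => LinearMap.toSpanSingleton K (Polynomial K)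
    (FreeCommMagma.peirce K i w)) ∘ₗ (MonoidAlgebra.coeffLinearEquiv K).toLinearMap

/-- The free commutative nonassociative algebra is commutative. -/
lemma fca_mul_comm (f g : MonoidAlgebra K (FreeCommMagma T)) : f * g = g * f := by
  rw [MonoidAlgebra.mul_def, MonoidAlgebra.mul_def, Finsupp.sum_comm]
  refine Finsupp.sum_congr fun a _ => Finsupp.sum_congr fun c _ => ?_
  rw [FreeCommMagma.mul_comm, mul_comm (f.coeff c) (g.coeff a)]

end Algebra

section Subst

variable (K : Type v) [Field K] {A : Type*} [Mul A]

/-- Evaluation of a nonassociative word under a substitution of the variables. -/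
def evalAux (ρ : T → A) : FreeMagma T → A
  | .of t => ρ t
  | .mul u v => evalAux ρ u * evalAux ρ v

@[simp] lemma evalAux_mul (ρ : T → A) (u v : FreeMagma T) :
    evalAux ρ (u * v) = evalAux ρ u * evalAux ρ v := rfl

/-- Evaluation of a commutative nonassociative monomial in a commutative magma
under a substitution of the variables. -/
def FreeCommMagma.eval (hA : ∀ a b : A, a * b = b * a) (ρ : T → A) :
    FreeCommMagma T → A :=
  Quot.lift (evalAux ρ) (by
    intro a b h
    induction h with
    | comm a b => exact hA _ _
    | mul_left c h ih => simp [ih]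
    | mul_right c h ih => simp [ih])

/-- The substitution homomorphism `ρ̂ : K(T) → A` extending a substitution
`ρ : T → A` of the variables, for `A` a commutative nonassociative `K`-algebra. -/
noncomputable def subst [AddCommMonoid A] [Module K A]
    (hA : ∀ a b : A, a * b = b * a) (ρ : T → A)
    (f : MonoidAlgebra K (FreeCommMagma T)) : A :=
  f.coeff.sum fun w c => c • FreeCommMagma.eval hA ρ w

end Subst

/-- The list of the leaves of a nonassociative word (a rooted binary tree with
leaves labeled by the variables), together with their heights. -/
def leaves : FreeMagma T → List (T × ℕ)
  | .of t => [(t, 0)]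
  | .mul u v => (leaves u ++ leaves v).map fun p => (p.1, p.2 + 1)

end Evanescent
namespace Evanescent

/-- The variable `x` of `K(x,y)`. -/
def x2 : FreeCommMagma (Fin 2) := FreeCommMagma.of 0

/-- The variable `y` of `K(x,y)`. -/
def y2 : FreeCommMagma (Fin 2) := FreeCommMagma.of 1

/-- The span of `{(x^{{r}}y)·y : 1 ≤ r ≤ n} ∪ {x^{{s}}y² : 0 ≤ s ≤ n}` in `K(x,y)`. -/
noncomputable def trainSpan2 (K : Type*) [Field K] (n : ℕ) :
    Submodule K (MonoidAlgebra K (FreeCommMagma (Fin 2))) :=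
  Submodule.span K
    (((fun r => mono K (lpow x2 r y2 * y2)) '' Set.Icc 1 n) ∪
     ((fun s => mono K (lpow x2 s (y2 * y2))) '' Set.Iic n))

end Evanescent

namespace Evanescent

open Polynomial Submodule LinearMap

section AuxLemmas

variable {K : Type*} [Field K]

/-! ### Basic structural lemmas at the level of `FreeCommMagma (Fin 2)` -/

lemma peirce_mul (i : Fin 2) (a b : FreeCommMagma (Fin 2)) :
    FreeCommMagma.peirce K i (a * b)
      = X * (FreeCommMagma.peirce K i a + FreeCommMagma.peirce K i b) := by
  induction a using Quot.ind
  induction b using Quot.ind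
  rfl

lemma count_mul (i : Fin 2) (a b : FreeCommMagma (Fin 2)) :
    FreeCommMagma.count i (a * b)
      = FreeCommMagma.count i a + FreeCommMagma.count i b := by
  induction a using Quot.ind
  induction b using Quot.ind
  rfl

@[simp] lemma peirce_x0 : FreeCommMagma.peirce K 0 x2 = 1 := rfl
@[simp] lemma peirce_x1 : FreeCommMagma.peirce K 1 x2 = 0 := rfl
@[simp] lemma peirce_y0 : FreeCommMagma.peirce K 0 y2 = 0 := rfl
@[simp] lemma peirce_y1 : FreeCommMagma.peirce K 1 y2 = 1 := rfl
@[simp] lemma count_x0 : FreeCommMagma.count 0 x2 = 1 := rfl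
@[simp] lemma count_x1 : FreeCommMagma.count 1 x2 = 0 := rfl
@[simp] lemma count_y0 : FreeCommMagma.count 0 y2 = 0 := rfl
@[simp] lemma count_y1 : FreeCommMagma.count 1 y2 = 1 := rfl

/-! ### The polynomial `X + X² + ⋯ + Xʳ` -/

noncomputable def sX (K : Type*) [Field K] (r : ℕ) : Polynomial K :=
  ∑ j ∈ Finset.range r, X ^ (j + 1)

lemma sX_succ (m : ℕ) : sX K (m + 1) = X * sX K m + X := by
  rw [sX, Finset.sum_range_succ', sX, Finset.mul_sum]
  congr 1
  · exact Finset.sum_congr rfl fun j _ => by ring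
  · simp

lemma coeff_sX (r k : ℕ) :
    (sX K r).coeff k = if 1 ≤ k ∧ k ≤ r then 1 else 0 := by
  rw [sX, finset_sum_coeff]
  simp only [coeff_X_pow]
  cases k with
  | zero => simp
  | succ m =>
    have hcongr : ∀ j ∈ Finset.range r,
        (if m + 1 = j + 1 then (1:K) else 0) = if j = m then 1 else 0 := by
      intro j _
      rcases eq_or_ne j m with rfl | h
      · simp
      · rw [if_neg (by omega), if_neg h]
    rw [Finset.sum_congr rfl hcongr, Finset.sum_ite_eq' (Finset.range r) m fun _ => (1:K)]
    simp only [Finset.mem_range]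
    exact if_congr (by omega) rfl rfl

/-! ### Peirce polynomials and degrees of the train monomials -/

lemma peirce0_lpow (r : ℕ) (g : FreeCommMagma (Fin 2)) :
    FreeCommMagma.peirce K 0 (lpow x2 r g)
      = sX K r + X ^ r * FreeCommMagma.peirce K 0 g := by
  induction r with
  | zero => simp [lpow, sX]
  | succ m ih =>
    show FreeCommMagma.peirce K 0 (x2 * lpow x2 m g) = _
    rw [peirce_mul, peirce_x0, ih, sX_succ]
    ring

lemma peirce1_lpow (r : ℕ) (g : FreeCommMagma (Fin 2)) :
    FreeCommMagma.peirce K 1 (lpow x2 r g)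
      = X ^ r * FreeCommMagma.peirce K 1 g := by
  induction r with
  | zero => simp [lpow]
  | succ m ih =>
    show FreeCommMagma.peirce K 1 (x2 * lpow x2 m g) = _
    rw [peirce_mul, peirce_x1, ih]
    ring

lemma count0_lpow (r : ℕ) (g : FreeCommMagma (Fin 2)) :
    FreeCommMagma.count 0 (lpow x2 r g) = r + FreeCommMagma.count 0 g := by
  induction r with
  | zero => simp [lpow]
  | succ m ih =>
    show FreeCommMagma.count 0 (x2 * lpow x2 m g) = _
    rw [count_mul, ih, count_x0]; omega

lemma count1_lpow (r : ℕ) (g : FreeCommMagma (Fin 2)) :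
    FreeCommMagma.count 1 (lpow x2 r g) = FreeCommMagma.count 1 g := by
  induction r with
  | zero => simp [lpow]
  | succ m ih =>
    show FreeCommMagma.count 1 (x2 * lpow x2 m g) = _
    rw [count_mul, ih, count_x1]; omega

lemma peirce0_U (r : ℕ) :
    FreeCommMagma.peirce K 0 (lpow x2 r y2 * y2) = X * sX K r := by
  rw [peirce_mul, peirce0_lpow, peirce_y0]
  ring

lemma peirce1_U (r : ℕ) :
    FreeCommMagma.peirce K 1 (lpow x2 r y2 * y2) = X ^ (r + 1) + X := by
  rw [peirce_mul, peirce1_lpow, peirce_y1]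
  ring

lemma peirce0_V (s : ℕ) :
    FreeCommMagma.peirce K 0 (lpow x2 s (y2 * y2)) = sX K s := by
  rw [peirce0_lpow, peirce_mul, peirce_y0]
  ring

lemma peirce1_V (s : ℕ) :
    FreeCommMagma.peirce K 1 (lpow x2 s (y2 * y2)) = C 2 * X ^ (s + 1) := by
  rw [peirce1_lpow, peirce_mul, peirce_y1]
  have : (C 2 : Polynomial K) = 1 + 1 := by
    rw [map_ofNat]; norm_num
  rw [this]
  ring

lemma count0_U (r : ℕ) : FreeCommMagma.count 0 (lpow x2 r y2 * y2) = r := by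
  rw [count_mul, count0_lpow]; simp

lemma count1_U (r : ℕ) : FreeCommMagma.count 1 (lpow x2 r y2 * y2) = 2 := by
  rw [count_mul, count1_lpow]; simp

lemma count0_V (s : ℕ) : FreeCommMagma.count 0 (lpow x2 s (y2 * y2)) = s := by
  rw [count0_lpow, count_mul]; simp

lemma count1_V (s : ℕ) : FreeCommMagma.count 1 (lpow x2 s (y2 * y2)) = 2 := by
  rw [count1_lpow, count_mul]; simp

/-! ### Word-level lemmas -/

lemma countAux_of' (i j : Fin 2) :
    countAux i (FreeMagma.of j) = if j = i then 1 else 0 := rfl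

lemma size_pos (u : FreeMagma (Fin 2)) : 1 ≤ countAux 0 u + countAux 1 u := by
  induction u with
  | ih1 j => fin_cases j <;> simp [countAux_of']
  | ih2 a b iha ihb => rw [countAux_mul, countAux_mul]; omega

lemma natDegree_peirceAux (i : Fin 2) (u : FreeMagma (Fin 2)) :
    (peirceAux K i u).natDegree + 1 ≤ countAux 0 u + countAux 1 u := by
  induction u with
  | ih1 j =>
    have h1 : (peirceAux K i (FreeMagma.of j)).natDegree = 0 := by
      rw [peirceAux_of]; split_ifs <;> simp
    have h2 := size_pos (FreeMagma.of j)
    omega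
  | ih2 a b iha ihb =>
    have hd : (peirceAux K i (a * b)).natDegree
        ≤ 1 + max (peirceAux K i a).natDegree (peirceAux K i b).natDegree := by
      rw [peirceAux_mul]
      calc (X * (peirceAux K i a + peirceAux K i b)).natDegree
          ≤ (X : Polynomial K).natDegree + (peirceAux K i a + peirceAux K i b).natDegree :=
            natDegree_mul_le
        _ ≤ 1 + max (peirceAux K i a).natDegree (peirceAux K i b).natDegree := by
            rw [natDegree_X]
            exact Nat.add_le_add_left (natDegree_add_le _ _) 1
    have sa := size_pos a
    have sb := size_pos b
    rw [countAux_mul, countAux_mul]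
    omega

lemma natDegree_peirce (i : Fin 2) (w : FreeCommMagma (Fin 2)) :
    (FreeCommMagma.peirce K i w).natDegree + 1
      ≤ FreeCommMagma.count 0 w + FreeCommMagma.count 1 w := by
  induction w using Quot.ind
  exact natDegree_peirceAux i _

lemma exists_mul_of_count (w : FreeCommMagma (Fin 2))
    (h : FreeCommMagma.count 1 w = 2) : ∃ a b : FreeCommMagma (Fin 2), w = a * b := by
  induction w using Quot.ind with | _ u => ?_
  cases u with
  | of j =>
    exfalso
    have h' : countAux 1 (FreeMagma.of j) = 2 := h
    rw [countAux_of'] at h'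
    split_ifs at h' <;> omega
  | mul a b => exact ⟨FreeCommMagma.mk a, FreeCommMagma.mk b, rfl⟩

lemma coeff0_peirce (i : Fin 2) (w : FreeCommMagma (Fin 2))
    (h : FreeCommMagma.count 1 w = 2) : (FreeCommMagma.peirce K i w).coeff 0 = 0 := by
  obtain ⟨a, b, rfl⟩ := exists_mul_of_count w h
  rw [peirce_mul, mul_coeff_zero, coeff_X_zero, zero_mul]

lemma kraft (h2 : (2:K) ≠ 0) (u : FreeMagma (Fin 2)) :
    (peirceAux K 0 u + peirceAux K 1 u).eval 2⁻¹ = 1 := by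
  induction u with
  | ih1 j => fin_cases j <;> simp [peirceAux_of]
  | ih2 a b iha ihb =>
    have hinv : (2:K)⁻¹ * 2 = 1 := inv_mul_cancel₀ h2
    simp only [peirceAux_mul, eval_mul, eval_add, eval_X] at *
    linear_combination (2:K)⁻¹ * iha + (2:K)⁻¹ * ihb + hinv

lemma kraft' (h2 : (2:K) ≠ 0) (w : FreeCommMagma (Fin 2)) :
    (FreeCommMagma.peirce K 0 w + FreeCommMagma.peirce K 1 w).eval 2⁻¹ = 1 := by
  induction w using Quot.ind
  exact kraft h2 _

lemma evalone (i : Fin 2) (u : FreeMagma (Fin 2)) :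
    (peirceAux K i u).eval 1 = (countAux i u : K) := by
  induction u with
  | ih1 j => rw [peirceAux_of, countAux_of']; split_ifs <;> simp
  | ih2 a b iha ihb =>
    simp only [peirceAux_mul, countAux_mul, eval_mul, eval_add, eval_X, iha, ihb]
    push_cast
    ring

lemma evalone' (i : Fin 2) (w : FreeCommMagma (Fin 2)) :
    (FreeCommMagma.peirce K i w).eval 1 = (FreeCommMagma.count i w : K) := by
  induction w using Quot.ind
  exact evalone i _

/-! ### `Dp` and `aug` on monomials -/

lemma mono_eq_single (w : FreeCommMagma (Fin 2)) :
    mono K w = MonoidAlgebra.single w (1:K) := rfl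

lemma Dp_mono (i : Fin 2) (w : FreeCommMagma (Fin 2)) :
    Dp K i (mono K w) = FreeCommMagma.peirce K i w := by
  have hc : (MonoidAlgebra.coeffLinearEquiv K) (MonoidAlgebra.single w (1:K))
      = Finsupp.single w 1 := rfl
  rw [Dp, mono_eq_single, LinearMap.comp_apply, LinearEquiv.coe_coe, hc, Finsupp.lsum_single,
    toSpanSingleton_apply_one]

lemma aug_single (w : FreeCommMagma (Fin 2)) (c : K) :
    aug K (MonoidAlgebra.single w c) = c := by
  have hc : (MonoidAlgebra.coeffLinearEquiv K) (MonoidAlgebra.single w c)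
      = Finsupp.single w c := rfl
  rw [aug, LinearMap.comp_apply, LinearEquiv.coe_coe, hc, Finsupp.lsum_single]
  rfl

lemma aug_mono (w : FreeCommMagma (Fin 2)) : aug K (mono K w) = 1 := by
  rw [mono_eq_single, aug_single]

lemma single_eq_smul_mono (w : FreeCommMagma (Fin 2)) (c : K) :
    (MonoidAlgebra.single w c : MonoidAlgebra K (FreeCommMagma (Fin 2))) = c • mono K w := by
  rw [mono_eq_single, MonoidAlgebra.smul_single, smul_eq_mul, mul_one]

lemma aug_kraft (h2 : (2:K) ≠ 0) (f : MonoidAlgebra K (FreeCommMagma (Fin 2))) :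
    aug K f = (Dp K 0 f + Dp K 1 f).eval 2⁻¹ := by
  induction f using MonoidAlgebra.induction_linear with
  | zero => simp
  | add f g hf hg =>
    simp only [map_add, hf, hg, eval_add]
    ring
  | single w c =>
    rw [aug_single, single_eq_smul_mono, map_smul, map_smul, Dp_mono, Dp_mono,
      ← smul_add, eval_smul, kraft' h2, smul_eq_mul, mul_one]

end AuxLemmas

end Evanescent
namespace Evanescent

open Polynomial Submodule LinearMap

section Main

variable {K : Type*} [Field K]

/-! ### Generating sets of `trainSpan2` -/

lemma genset_zero :
    (((fun r => mono K (lpow x2 r y2 * y2)) '' Set.Icc 1 0) ∪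
     ((fun s => mono K (lpow x2 s (y2 * y2))) '' Set.Iic 0))
    = {mono K (lpow x2 0 (y2 * y2))} := by
  rw [Set.Icc_eq_empty (by omega), Set.image_empty, Set.empty_union,
    show Set.Iic 0 = ({0} : Set ℕ) from by ext; simp, Set.image_singleton]

lemma genset_succ (n : ℕ) :
    (((fun r => mono K (lpow x2 r y2 * y2)) '' Set.Icc 1 (n+1)) ∪
     ((fun s => mono K (lpow x2 s (y2 * y2))) '' Set.Iic (n+1)))
    = insert (mono K (lpow x2 (n+1) y2 * y2))
        (insert (mono K (lpow x2 (n+1) (y2 * y2)))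
          (((fun r => mono K (lpow x2 r y2 * y2)) '' Set.Icc 1 n) ∪
           ((fun s => mono K (lpow x2 s (y2 * y2))) '' Set.Iic n))) := by
  rw [show Set.Icc 1 (n+1) = insert (n+1) (Set.Icc 1 n) from by ext; simp; omega,
      show Set.Iic (n+1) = insert (n+1) (Set.Iic n) from by ext; simp; omega,
      Set.image_insert_eq, Set.image_insert_eq, Set.insert_union, Set.union_insert]

lemma trainSpan2_coeff (n : ℕ) (i : Fin 2) {f : MonoidAlgebra K (FreeCommMagma (Fin 2))}
    (hf : f ∈ trainSpan2 K n) {k : ℕ} (hk : n + 2 ≤ k) : (Dp K i f).coeff k = 0 := by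
  have hle : trainSpan2 K n ≤ LinearMap.ker ((lcoeff K k).comp (Dp K i)) := by
    rw [trainSpan2, Submodule.span_le]
    rintro z (⟨r, hr, rfl⟩ | ⟨s, hs, rfl⟩)
    · rw [Set.mem_Icc] at hr
      simp only [SetLike.mem_coe, LinearMap.mem_ker, coe_comp, Function.comp_apply,
        lcoeff_apply, Dp_mono]
      refine coeff_eq_zero_of_natDegree_lt ?_
      have hd := natDegree_peirce (K := K) i (lpow x2 r y2 * y2)
      rw [count0_U, count1_U] at hd
      omega
    · rw [Set.mem_Iic] at hs
      simp only [SetLike.mem_coe, LinearMap.mem_ker, coe_comp, Function.comp_apply,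
        lcoeff_apply, Dp_mono]
      refine coeff_eq_zero_of_natDegree_lt ?_
      have hd := natDegree_peirce (K := K) i (lpow x2 s (y2 * y2))
      rw [count0_V, count1_V] at hd
      omega
  have := hle hf
  simpa using this

/-! ### Injectivity of the Peirce pair on `trainSpan2` -/

lemma trainSpan2_inj (h2 : (2:K) ≠ 0) :
    ∀ n : ℕ, ∀ f ∈ trainSpan2 K n, Dp K 0 f = 0 → Dp K 1 f = 0 → f = 0 := by
  intro n
  induction n with
  | zero =>
    intro f hf h0 h1
    rw [trainSpan2, genset_zero, Submodule.mem_span_singleton] at hf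
    obtain ⟨c, rfl⟩ := hf
    have hc := congrArg (fun p => p.coeff 1) h1
    simp only [map_smul, Dp_mono, peirce1_V, coeff_smul, coeff_C_mul, zero_add, pow_one,
      coeff_X_one, coeff_zero, smul_eq_mul, mul_one] at hc
    rcases mul_eq_zero.mp hc with h | h
    · simp [h]
    · exact absurd h h2
  | succ n ih =>
    intro f hf h0 h1
    rw [trainSpan2, genset_succ] at hf
    obtain ⟨a, z, hz, rfl⟩ := Submodule.mem_span_insert.mp hf
    obtain ⟨b, g, hg, rfl⟩ := Submodule.mem_span_insert.mp hz
    have hgmem : g ∈ trainSpan2 K n := by rw [trainSpan2]; exact hg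
    have e0 : (Dp K 0 g).coeff (n+2) = 0 := trainSpan2_coeff n 0 hgmem le_rfl
    have e1 : (Dp K 1 g).coeff (n+2) = 0 := trainSpan2_coeff n 1 hgmem le_rfl
    have k0U : (X * sX K (n+1)).coeff (n+2) = (1:K) := by
      rw [coeff_X_mul, coeff_sX, if_pos ⟨by omega, le_rfl⟩]
    have k0V : (sX K (n+1)).coeff (n+2) = (0:K) := by
      rw [coeff_sX, if_neg (by omega)]
    have k1U : ((X ^ (n+1+1) + X : Polynomial K)).coeff (n+2) = 1 := by
      rw [coeff_add, coeff_X_pow, if_pos rfl, coeff_X_of_ne_one (by omega)]; ring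
    have k1V : ((C 2 * X ^ (n+1+1) : Polynomial K)).coeff (n+2) = 2 := by
      rw [coeff_C_mul, coeff_X_pow, if_pos rfl, mul_one]
    have c0 := congrArg (fun p => p.coeff (n+2)) h0
    have c1 := congrArg (fun p => p.coeff (n+2)) h1
    simp only [map_add, map_smul, Dp_mono, peirce0_U, peirce0_V, peirce1_U, peirce1_V,
      coeff_add, coeff_smul, smul_eq_mul, coeff_zero, e0, e1, k0U, k0V, k1U, k1V,
      mul_one, mul_zero, add_zero, zero_add] at c0 c1
    have ha : a = 0 := by linear_combination c0
    have hb2 : b * 2 = 0 := by linear_combination c1 - ha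
    have hb : b = 0 := by
      rcases mul_eq_zero.mp hb2 with h | h
      · exact h
      · exact absurd h h2
    rw [ha, hb] at h0 h1 ⊢
    simp only [zero_smul, zero_add] at h0 h1 ⊢
    exact ih g hgmem h0 h1

/-! ### Linear independence and dimension of `trainSpan2` -/

lemma mono_linIndep {ι : Type*} (h : ι → FreeCommMagma (Fin 2)) (hinj : Function.Injective h) :
    LinearIndependent K fun i => mono K (h i) := by
  have hb : LinearIndependent K
      fun w : FreeCommMagma (Fin 2) =>
        (MonoidAlgebra.single w 1 : MonoidAlgebra K (FreeCommMagma (Fin 2))) := by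
    have := (MonoidAlgebra.basis (FreeCommMagma (Fin 2)) K).linearIndependent
    exact this
  exact hb.comp h hinj

lemma U_ne_V {r s : ℕ} (hr : 1 ≤ r) :
    (lpow x2 r y2 * y2 : FreeCommMagma (Fin 2)) ≠ lpow x2 s (y2 * y2) := by
  intro heq
  rcases eq_or_ne r s with rfl | hne
  · have h1 := congrArg (FreeCommMagma.peirce ℚ 1) heq
    rw [peirce1_U, peirce1_V] at h1
    have hL : ((X ^ (r+1) + X : Polynomial ℚ)).coeff 1 = 1 := by
      rw [coeff_add, coeff_X_pow, if_neg (by omega), coeff_X_one]; ring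
    have hR : ((C 2 * X ^ (r+1) : Polynomial ℚ)).coeff 1 = 0 := by
      rw [coeff_C_mul, coeff_X_pow, if_neg (by omega), mul_zero]
    rw [h1, hR] at hL
    norm_num at hL
  · refine hne ?_
    have := congrArg (FreeCommMagma.count 0) heq
    rwa [count0_U, count0_V] at this

def idxFun (n : ℕ) : Fin n ⊕ Fin (n+1) → FreeCommMagma (Fin 2) :=
  Sum.elim (fun r => lpow x2 ((r:ℕ)+1) y2 * y2) (fun s => lpow x2 (s:ℕ) (y2 * y2))

lemma idxFun_inj (n : ℕ) : Function.Injective (idxFun n) := by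
  rintro (r | s) (r' | s') h <;> simp only [idxFun, Sum.elim_inl, Sum.elim_inr] at h
  · have := congrArg (FreeCommMagma.count 0) h
    rw [count0_U, count0_U] at this
    have : r = r' := Fin.ext (by omega)
    rw [this]
  · exact absurd h (U_ne_V (by omega))
  · exact absurd h.symm (U_ne_V (by omega))
  · have := congrArg (FreeCommMagma.count 0) h
    rw [count0_V, count0_V] at this
    have : s = s' := Fin.ext this
    rw [this]

lemma trainSpan2_eq_span_range (n : ℕ) :
    trainSpan2 K n = span K (Set.range fun i => mono K (idxFun n i)) := by
  rw [trainSpan2]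
  congr 1
  rw [show (fun i => mono K (idxFun n i))
      = Sum.elim (fun r : Fin n => mono K (lpow x2 ((r:ℕ)+1) y2 * y2))
          (fun s : Fin (n+1) => mono K (lpow x2 (s:ℕ) (y2 * y2))) from by
        funext i; cases i <;> rfl,
    Set.Sum.elim_range]
  congr 1
  · ext z
    simp only [Set.mem_image, Set.mem_range, Set.mem_Icc]
    constructor
    · rintro ⟨r, ⟨h1, h2⟩, rfl⟩
      obtain ⟨m, rfl⟩ : ∃ m, r = m + 1 := ⟨r - 1, by omega⟩
      exact ⟨⟨m, by omega⟩, rfl⟩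
    · rintro ⟨i, rfl⟩
      exact ⟨(i:ℕ)+1, ⟨by omega, by omega⟩, rfl⟩
  · ext z
    simp only [Set.mem_image, Set.mem_range, Set.mem_Iic]
    constructor
    · rintro ⟨s, hs, rfl⟩
      exact ⟨⟨s, by omega⟩, rfl⟩
    · rintro ⟨i, rfl⟩
      exact ⟨(i:ℕ), by omega, rfl⟩

lemma finrank_trainSpan2 (n : ℕ) : Module.finrank K (trainSpan2 K n) = 2*n+1 := by
  rw [trainSpan2_eq_span_range, finrank_span_eq_card (mono_linIndep _ (idxFun_inj n))]
  simp only [Fintype.card_sum, Fintype.card_fin]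
  omega

instance finiteDimensional_trainSpan2 (n : ℕ) : FiniteDimensional K (trainSpan2 K n) := by
  rw [trainSpan2_eq_span_range]
  exact FiniteDimensional.span_of_finite K (Set.finite_range _)

end Main

end Evanescent
namespace Evanescent

open Polynomial Submodule LinearMap

section PolySide

variable {K : Type*} [Field K]

lemma linIndep_Xpow (n : ℕ) :
    LinearIndependent K fun j : Fin (n+1) => (X : Polynomial K) ^ ((j:ℕ)+1) := by
  have hb := (Polynomial.basisMonomials K).linearIndependent
  have h := hb.comp (fun j : Fin (n+1) => (j:ℕ)+1)
    (fun a b hab => by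
      apply Fin.ext
      have h : (a:ℕ)+1 = (b:ℕ)+1 := hab
      omega)
  convert h using 1
  funext j
  rw [Function.comp_apply]
  show (X : Polynomial K) ^ ((j:ℕ)+1) = Polynomial.basisMonomials K ((j:ℕ)+1)
  rw [show (Polynomial.basisMonomials K) ((j:ℕ)+1) = Polynomial.monomial ((j:ℕ)+1) 1 from by
    rw [Polynomial.coe_basisMonomials]]
  rw [X_pow_eq_monomial]

noncomputable def pairFun (K : Type*) [Field K] (n : ℕ) :
    Fin (n+1) ⊕ Fin (n+1) → Polynomial K × Polynomial K :=
  Sum.elim (fun j => ((X:Polynomial K) ^ ((j:ℕ)+1), 0))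
    (fun j => (0, (X:Polynomial K) ^ ((j:ℕ)+1)))

lemma linIndep_pairFun (n : ℕ) : LinearIndependent K (pairFun K n) := by
  have h1 : LinearIndependent K
      fun j : Fin (n+1) => ((X:Polynomial K) ^ ((j:ℕ)+1), (0:Polynomial K)) := by
    have := (linIndep_Xpow (K := K) n).map'
      (LinearMap.inl K (Polynomial K) (Polynomial K)) Submodule.ker_inl
    exact this
  have h2 : LinearIndependent K
      fun j : Fin (n+1) => ((0:Polynomial K), (X:Polynomial K) ^ ((j:ℕ)+1)) := by
    have := (linIndep_Xpow (K := K) n).map'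
      (LinearMap.inr K (Polynomial K) (Polynomial K)) Submodule.ker_inr
    exact this
  refine h1.sum_type h2 ?_
  rw [Submodule.disjoint_def]
  intro z hz1 hz2
  have hsnd : z.2 = 0 := by
    have hle : span K (Set.range fun j : Fin (n+1) =>
        ((X:Polynomial K) ^ ((j:ℕ)+1), (0:Polynomial K)))
        ≤ LinearMap.ker (LinearMap.snd K (Polynomial K) (Polynomial K)) :=
      span_le.mpr (by rintro _ ⟨j, rfl⟩; simp)
    simpa using hle hz1
  have hfst : z.1 = 0 := by
    have hle : span K (Set.range fun j : Fin (n+1) =>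
        ((0:Polynomial K), (X:Polynomial K) ^ ((j:ℕ)+1)))
        ≤ LinearMap.ker (LinearMap.fst K (Polynomial K) (Polynomial K)) :=
      span_le.mpr (by rintro _ ⟨j, rfl⟩; simp)
    simpa using hle hz2
  exact Prod.ext_iff.mpr ⟨hfst, hsnd⟩

noncomputable def UU (K : Type*) [Field K] (n : ℕ) : Submodule K (Polynomial K × Polynomial K) :=
  span K (Set.range (pairFun K n))

lemma UU_eq_sup (n : ℕ) : UU K n
    = (span K (Set.range fun j : Fin (n+1) => (X:Polynomial K) ^ ((j:ℕ)+1))).map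
        (LinearMap.inl K (Polynomial K) (Polynomial K))
      ⊔ (span K (Set.range fun j : Fin (n+1) => (X:Polynomial K) ^ ((j:ℕ)+1))).map
        (LinearMap.inr K (Polynomial K) (Polynomial K)) := by
  rw [UU, pairFun, Set.Sum.elim_range, Submodule.span_union]
  congr 1
  · rw [Submodule.map_span, ← Set.range_comp]
    rfl
  · rw [Submodule.map_span, ← Set.range_comp]
    rfl

lemma mem_spanXpow {n : ℕ} {p : Polynomial K} (h0 : p.coeff 0 = 0) (hd : p.natDegree ≤ n+1) :
    p ∈ span K (Set.range fun j : Fin (n+1) => (X:Polynomial K) ^ ((j:ℕ)+1)) := by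
  have hrep := p.as_sum_range' (n+2) (by omega)
  rw [hrep]
  apply Submodule.sum_mem
  intro j hj
  rw [Finset.mem_range] at hj
  cases j with
  | zero => rw [h0]; simp
  | succ k =>
    rw [← Polynomial.smul_X_eq_monomial]
    exact Submodule.smul_mem _ _ (Submodule.subset_span ⟨⟨k, by omega⟩, rfl⟩)

lemma mem_UU {n : ℕ} {p q : Polynomial K} (hp0 : p.coeff 0 = 0) (hpd : p.natDegree ≤ n+1)
    (hq0 : q.coeff 0 = 0) (hqd : q.natDegree ≤ n+1) : (p, q) ∈ UU K n := by
  rw [UU_eq_sup]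
  have hp : ((p, 0) : Polynomial K × Polynomial K)
      ∈ (span K (Set.range fun j : Fin (n+1) => (X:Polynomial K) ^ ((j:ℕ)+1))).map
        (LinearMap.inl K (Polynomial K) (Polynomial K)) := ⟨p, mem_spanXpow hp0 hpd, rfl⟩
  have hq : ((0, q) : Polynomial K × Polynomial K)
      ∈ (span K (Set.range fun j : Fin (n+1) => (X:Polynomial K) ^ ((j:ℕ)+1))).map
        (LinearMap.inr K (Polynomial K) (Polynomial K)) := ⟨q, mem_spanXpow hq0 hqd, rfl⟩
  have := Submodule.add_mem _ (Submodule.mem_sup_left hp) (Submodule.mem_sup_right hq)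
  simpa using this

lemma finrank_UU (n : ℕ) : Module.finrank K (UU K n) = 2*n+2 := by
  rw [UU, finrank_span_eq_card (linIndep_pairFun n)]
  simp only [Fintype.card_sum, Fintype.card_fin]
  omega

noncomputable def EE (K : Type*) [Field K] : Polynomial K × Polynomial K →ₗ[K] K :=
  (2:K) • ((Polynomial.leval 2⁻¹).comp (LinearMap.fst K (Polynomial K) (Polynomial K))
    + (Polynomial.leval 2⁻¹).comp (LinearMap.snd K (Polynomial K) (Polynomial K)))
    - (Polynomial.leval 1).comp (LinearMap.snd K (Polynomial K) (Polynomial K))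

lemma EE_apply (p q : Polynomial K) :
    EE K (p, q) = 2 * (p.eval 2⁻¹ + q.eval 2⁻¹) - q.eval 1 := by
  simp [EE, smul_eq_mul]
  ring

end PolySide

end Evanescent
namespace Evanescent

open Polynomial Submodule LinearMap

section Glue

variable {K : Type*} [Field K]

lemma DpPair_mono_mem_WW (h2 : (2:K) ≠ 0) {n : ℕ} {w : FreeCommMagma (Fin 2)}
    (hc0 : FreeCommMagma.count 0 w ≤ n) (hc1 : FreeCommMagma.count 1 w = 2) :
    (Dp K 0 (mono K w), Dp K 1 (mono K w)) ∈ UU K n ⊓ LinearMap.ker (EE K) := by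
  constructor
  · rw [Dp_mono, Dp_mono]
    have hd0 := natDegree_peirce (K := K) 0 w
    have hd1 := natDegree_peirce (K := K) 1 w
    exact mem_UU (coeff0_peirce 0 w hc1) (by omega) (coeff0_peirce 1 w hc1) (by omega)
  · show ((Dp K 0) (mono K w), (Dp K 1) (mono K w)) ∈ LinearMap.ker (EE K)
    rw [LinearMap.mem_ker]
    show EE K ((Dp K 0) (mono K w), (Dp K 1) (mono K w)) = 0
    rw [Dp_mono, Dp_mono, EE_apply]
    have hk := kraft' (K := K) h2 w
    rw [eval_add] at hk
    have he := evalone' (K := K) 1 w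
    rw [hc1] at he
    rw [hk, he]
    norm_num

lemma map_le_WW (h2 : (2:K) ≠ 0) (n : ℕ) :
    Submodule.map ((Dp K 0).prod (Dp K 1)) (trainSpan2 K n)
      ≤ UU K n ⊓ LinearMap.ker (EE K) := by
  rw [Submodule.map_le_iff_le_comap, trainSpan2, Submodule.span_le]
  rintro z (⟨r, hr, rfl⟩ | ⟨s, hs, rfl⟩)
  · rw [Set.mem_Icc] at hr
    show ((Dp K 0).prod (Dp K 1)) (mono K (lpow x2 r y2 * y2)) ∈ UU K n ⊓ LinearMap.ker (EE K)
    exact DpPair_mono_mem_WW h2 (by rw [count0_U]; omega) (count1_U r)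
  · rw [Set.mem_Iic] at hs
    show ((Dp K 0).prod (Dp K 1)) (mono K (lpow x2 s (y2 * y2))) ∈ UU K n ⊓ LinearMap.ker (EE K)
    exact DpPair_mono_mem_WW h2 (by rw [count0_V]; omega) (count1_V s)

lemma finrank_WW (h2 : (2:K) ≠ 0) (n : ℕ) :
    Module.finrank K (UU K n ⊓ LinearMap.ker (EE K) : Submodule K (Polynomial K × Polynomial K))
      = 2*n+1 := by
  haveI : FiniteDimensional K (UU K n) := FiniteDimensional.span_of_finite K (Set.finite_range _)
  set E' : (UU K n) →ₗ[K] K := (EE K).comp (UU K n).subtype with hE'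
  have hker : (UU K n ⊓ LinearMap.ker (EE K))
      = Submodule.map (UU K n).subtype (LinearMap.ker E') := by
    rw [hE', LinearMap.ker_comp, Submodule.map_comap_subtype]
  have hrange : LinearMap.range E' = ⊤ := by
    rw [eq_top_iff]
    intro c _
    have hX : ((X : Polynomial K), (0:Polynomial K)) ∈ UU K n := by
      apply Submodule.subset_span
      exact ⟨Sum.inl 0, by simp [pairFun]⟩
    have h1 : (1:K) ∈ LinearMap.range E' := by
      refine ⟨⟨((X : Polynomial K), 0), hX⟩, ?_⟩
      show EE K ((X : Polynomial K), (0:Polynomial K)) = 1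
      rw [EE_apply]
      simp
      exact mul_inv_cancel₀ h2
    have := Submodule.smul_mem (LinearMap.range E') c h1
    simpa using this
  have hrn := LinearMap.finrank_range_add_finrank_ker E'
  rw [hrange, finrank_top, Module.finrank_self] at hrn
  have hU := finrank_UU (K := K) n
  have hEq : Module.finrank K (LinearMap.ker E')
      = Module.finrank K (Submodule.map (UU K n).subtype (LinearMap.ker E')) :=
    LinearEquiv.finrank_eq (Submodule.equivMapOfInjective ((UU K n).subtype)
      (Submodule.injective_subtype (UU K n)) (LinearMap.ker E'))
  rw [hker, ← hEq]
  omega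

lemma finrank_map_DpPair (h2 : (2:K) ≠ 0) (n : ℕ) :
    Module.finrank K (Submodule.map ((Dp K 0).prod (Dp K 1)) (trainSpan2 K n)) = 2*n+1 := by
  set Φ' := ((Dp K 0).prod (Dp K 1)).domRestrict (trainSpan2 K n) with hΦ'
  have hker : LinearMap.ker Φ' = ⊥ := by
    rw [LinearMap.ker_eq_bot']
    rintro ⟨f, hf⟩ hmf
    have hpair : ((Dp K 0) f, (Dp K 1) f) = ((0 : Polynomial K), (0 : Polynomial K)) := hmf
    have h0 : Dp K 0 f = 0 := congrArg Prod.fst hpair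
    have h1 : Dp K 1 f = 0 := congrArg Prod.snd hpair
    exact Subtype.ext (trainSpan2_inj h2 n f hf h0 h1)
  have hrn := LinearMap.finrank_range_add_finrank_ker Φ'
  rw [LinearMap.range_domRestrict, hker, finrank_bot, add_zero, finrank_trainSpan2] at hrn
  exact hrn

lemma map_DpPair_eq (h2 : (2:K) ≠ 0) (n : ℕ) :
    Submodule.map ((Dp K 0).prod (Dp K 1)) (trainSpan2 K n)
      = UU K n ⊓ LinearMap.ker (EE K) := by
  haveI : FiniteDimensional K (UU K n) := FiniteDimensional.span_of_finite K (Set.finite_range _)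
  haveI : FiniteDimensional K
      (UU K n ⊓ LinearMap.ker (EE K) : Submodule K (Polynomial K × Polynomial K)) :=
    Submodule.finiteDimensional_of_le inf_le_left
  refine Submodule.eq_of_le_of_finrank_le (map_le_WW h2 n) ?_
  rw [finrank_WW h2 n, finrank_map_DpPair h2 n]

end Glue

end Evanescent
open Evanescent in
/-- (i) There is no train Peirce-evanescent identity of degree `(1,2)`;
(ii) for `n ≥ 2` and every monomial `w` of bidegree `(n,2)` other than `(x^{{n}}y)·y` and
`x^{{n}}y²` there is a unique `P_w` in the span of
`{(x^{{r}}y)·y : 1 ≤ r ≤ n} ∪ {x^{{s}}y² : 0 ≤ s ≤ n}` with `ε(P_w) = 1` and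
`∂ₓ(w − P_w) = ∂_y(w − P_w) = 0`; consequently `w − P_w` is a Peirce-evanescent
identity. -/
theorem train_identities_bidegree_n_two
    {K : Type*} [Field K] (hchar : (2 : K) ≠ 0) :
    (∀ a b c : K,
      (∀ i : Fin 2, Dp K i (a • mono K ((x2 * y2) * y2) + b • mono K (x2 * (y2 * y2))
        + c • mono K (y2 * y2)) = 0) →
      a • mono K ((x2 * y2) * y2) + b • mono K (x2 * (y2 * y2))
        + c • mono K (y2 * y2) = 0) ∧
    (∀ n : ℕ, 2 ≤ n → ∀ w : FreeCommMagma (Fin 2),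
      FreeCommMagma.count 0 w = n → FreeCommMagma.count 1 w = 2 →
      w ≠ lpow x2 n y2 * y2 → w ≠ lpow x2 n (y2 * y2) →
      (∃! P : MonoidAlgebra K (FreeCommMagma (Fin 2)),
        P ∈ trainSpan2 K n ∧ aug K P = 1 ∧
        ∀ i : Fin 2, Dp K i (mono K w - P) = 0) ∧
      (∀ P : MonoidAlgebra K (FreeCommMagma (Fin 2)),
        P ∈ trainSpan2 K n → aug K P = 1 →
        (∀ i : Fin 2, Dp K i (mono K w - P) = 0) →
        mono K w - P ≠ 0 ∧ aug K (mono K w - P) = 0)) := by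
  constructor
  · intro a b c h
    have hmem : a • mono K ((x2 * y2) * y2) + b • mono K (x2 * (y2 * y2))
        + c • mono K (y2 * y2) ∈ trainSpan2 K 1 := by
      refine Submodule.add_mem _ (Submodule.add_mem _ ?_ ?_) ?_
      · exact Submodule.smul_mem _ _
          (Submodule.subset_span (Or.inl ⟨1, by simp, rfl⟩))
      · exact Submodule.smul_mem _ _
          (Submodule.subset_span (Or.inr ⟨1, by simp, rfl⟩))
      · exact Submodule.smul_mem _ _
          (Submodule.subset_span (Or.inr ⟨0, by simp, rfl⟩))
    exact trainSpan2_inj hchar 1 _ hmem (h 0) (h 1)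
  · intro n hn w hc0 hc1 hne1 hne2
    have hWmem : ((Dp K 0) (mono K w), (Dp K 1) (mono K w))
        ∈ UU K n ⊓ LinearMap.ker (EE K) :=
      DpPair_mono_mem_WW hchar (le_of_eq hc0) hc1
    rw [← map_DpPair_eq hchar n] at hWmem
    obtain ⟨P, hPmem, hPeq⟩ := hWmem
    have hpair : ((Dp K 0) P, (Dp K 1) P) = ((Dp K 0) (mono K w), (Dp K 1) (mono K w)) := hPeq
    have hP0 : Dp K 0 P = Dp K 0 (mono K w) := congrArg Prod.fst hpair
    have hP1 : Dp K 1 P = Dp K 1 (mono K w) := congrArg Prod.snd hpair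
    have hDP : ∀ i : Fin 2, Dp K i (mono K w - P) = 0 := by
      intro i
      rw [map_sub]
      fin_cases i
      · show Dp K 0 (mono K w) - Dp K 0 P = 0
        rw [hP0, sub_self]
      · show Dp K 1 (mono K w) - Dp K 1 P = 0
        rw [hP1, sub_self]
    have haug : ∀ Q ∈ trainSpan2 K n, (∀ i : Fin 2, Dp K i (mono K w - Q) = 0) →
        aug K Q = 1 := by
      intro Q hQ hD
      have h := aug_kraft hchar (mono K w - Q)
      rw [hD 0, hD 1, add_zero, Polynomial.eval_zero, map_sub, aug_mono] at h
      linear_combination -h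
    constructor
    · refine ⟨P, ⟨hPmem, haug P hPmem hDP, hDP⟩, ?_⟩
      rintro Q ⟨hQmem, hQaug, hQD⟩
      have e : Q - P = (mono K w - P) - (mono K w - Q) := by abel
      have h0 : Dp K 0 (Q - P) = 0 := by rw [e, map_sub, hDP 0, hQD 0, sub_zero]
      have h1 : Dp K 1 (Q - P) = 0 := by rw [e, map_sub, hDP 1, hQD 1, sub_zero]
      exact sub_eq_zero.mp
        (trainSpan2_inj hchar n (Q - P) (Submodule.sub_mem _ hQmem hPmem) h0 h1)
    · intro Q hQmem hQaug hQD
      have key : ∀ Q' ∈ trainSpan2 K n, Q'.coeff w = 0 := by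
        intro Q' hQ'
        rw [trainSpan2] at hQ'
        induction hQ' using Submodule.span_induction with
        | mem z hz =>
          rcases hz with ⟨r, hr, rfl⟩ | ⟨s, hs, rfl⟩
          · rw [Set.mem_Icc] at hr
            have hne : lpow x2 r y2 * y2 ≠ w := by
              intro he
              rcases eq_or_ne r n with rfl | hrn
              · exact hne1 he.symm
              · refine hrn ?_
                have := congrArg (FreeCommMagma.count 0) he
                rwa [count0_U, hc0] at this
            show (mono K (lpow x2 r y2 * y2)).coeff w = 0
            rw [mono_eq_single]
            exact Finsupp.single_eq_of_ne' hne
          · rw [Set.mem_Iic] at hs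
            have hne : lpow x2 s (y2 * y2) ≠ w := by
              intro he
              rcases eq_or_ne s n with rfl | hsn
              · exact hne2 he.symm
              · refine hsn ?_
                have := congrArg (FreeCommMagma.count 0) he
                rwa [count0_V, hc0] at this
            show (mono K (lpow x2 s (y2 * y2))).coeff w = 0
            rw [mono_eq_single]
            exact Finsupp.single_eq_of_ne' hne
        | zero => rfl
        | add f g _ _ hf hg => rw [MonoidAlgebra.coeff_add, Finsupp.add_apply, hf, hg, add_zero]
        | smul c f _ hf => rw [MonoidAlgebra.coeff_smul, Finsupp.smul_apply, hf, smul_zero]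
      have hone : (mono K w - Q).coeff w = 1 := by
        rw [MonoidAlgebra.coeff_sub, Finsupp.sub_apply, mono_eq_single,
          MonoidAlgebra.coeff_single, Finsupp.single_eq_same, key Q hQmem, sub_zero]
      refine ⟨?_, ?_⟩
      · intro hzero
        rw [hzero] at hone
        simp at hone
      · rw [map_sub, aug_mono, hQaug, sub_self]
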